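/- For polynomials f₁,…,f_d in one variable, f₁(x₁) ⋆_K ⋯ ⋆_K f_d(x_d) = Σ_{k≥0} (ℏ^k/k!) Σ_{deg M = 2k} (k choose m₁₂,…,m_{d−1,d}) f₁^{(α₁)}(x₁)⋯f_d^{(α_d)}(x_d) Π_{i<j} K_{ij}^{m_{ij}}, where the inner sum is over all d×d adjacency matrices M with deg M = 2k and α_i = Σ_j m_{ij}. -/

import Mathlib

/- Statement 7: for one-variable polynomials `f₁,…,f_d`,
`f₁(x₁) ⋆_K ⋯ ⋆_K f_d(x_d) = exp{ℏ Σ_{i<j} K_{ij} ∂_i∂_j}(f₁⋯f_d)`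
equals `Σ_{k≥0} (ℏ^k/k!) Σ_{deg M = 2k} (k choose m₁₂,…,m_{d−1,d})
f₁^{(α₁)}(x₁)⋯f_d^{(α_d)}(x_d) Π_{i<j} K_{ij}^{m_{ij}}`, the inner sum over all
`d×d` adjacency matrices of degree `2k` (parameterized by their
upper-triangular parts, functions supported on `{p | p.1 < p.2}` summing to
`k`) and `α_i = Σ_j m_{ij}`. -/

open MvPolynomial

noncomputable section

variable {R : Type} [CommRing R] [Algebra ℚ R]

/-- the finset of pairs `i < j`. -/
def pairs (d : ℕ) : Finset (Fin d × Fin d) :=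
  Finset.univ.filter (fun p : Fin d × Fin d => p.1 < p.2)

/-- the operator `Σ_{i<j} K_{ij} ∂_i ∂_j`. -/
def Lop {d : ℕ} (K : Fin d → Fin d → R) :
    Module.End R (MvPolynomial (Fin d) R) :=
  ∑ p ∈ pairs d, K p.1 p.2 • ((pderiv p.1).toLinearMap ∘ₗ (pderiv p.2).toLinearMap)

/-- the row sums `α_i = Σ_j m_{ij}` of the adjacency matrix with
upper-triangular part `M`. -/
def rowSum {d : ℕ} (M : Fin d × Fin d → ℕ) (i : Fin d) : ℕ :=
  ∑ j : Fin d, (if i < j then M (i, j) else if j < i then M (j, i) else 0)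

/-- the multiple star product
`f₁(x₁) ⋆_K ⋯ ⋆_K f_d(x_d) = exp{ℏ Σ_{i<j} K_{ij} ∂_i∂_j}(f₁(x₁)⋯f_d(x_d))`. -/
def multiStar {d : ℕ} (ℏ : R) (K : Fin d → Fin d → R)
    (f : Fin d → Polynomial R) : MvPolynomial (Fin d) R :=
  finsum fun n : ℕ =>
    (n.factorial : ℚ)⁻¹ •
      (ℏ ^ n • ((Lop K ^ n) (∏ i : Fin d, Polynomial.aeval (X i) (f i))))

section Aux

set_option linter.unusedSectionVars false

variable {d : ℕ}

omit [Algebra ℚ R] in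
lemma aux_pderiv_pderiv (i j : Fin d) (p : MvPolynomial (Fin d) R) :
    pderiv i (pderiv j p) = pderiv j (pderiv i p) := by
  rcases eq_or_ne i j with rfl | hij
  · rfl
  induction p using MvPolynomial.induction_on' with
  | add p q hp hq => simp [map_add, hp, hq]
  | monomial s a =>
      simp only [pderiv_monomial]
      have hidx : s - Finsupp.single j 1 - Finsupp.single i 1
          = s - Finsupp.single i 1 - Finsupp.single j 1 := by
        ext k
        rw [Finsupp.tsub_apply, Finsupp.tsub_apply, Finsupp.tsub_apply, Finsupp.tsub_apply]
        omega
      rw [hidx]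
      congr 1
      rw [Finsupp.tsub_apply, Finsupp.tsub_apply,
        Finsupp.single_eq_of_ne hij, Finsupp.single_eq_of_ne hij.symm]
      simp
      ring

/-- the single partial derivative as an endomorphism. -/
def Dop (i : Fin d) : Module.End R (MvPolynomial (Fin d) R) := (pderiv i).toLinearMap

lemma Dop_comm (i j : Fin d) : Commute (Dop (R := R) i) (Dop j) :=
  LinearMap.ext fun p => aux_pderiv_pderiv i j p

/-- the product of single-variable polynomials as a multivariate polynomial. -/
def prodA (g : Fin d → Polynomial R) : MvPolynomial (Fin d) R :=
  ∏ i, Polynomial.aeval (X i) (g i)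

lemma pderiv_aeval_X (i j : Fin d) (g : Polynomial R) :
    pderiv i (Polynomial.aeval (X j : MvPolynomial (Fin d) R) g) =
      if j = i then Polynomial.aeval (X j : MvPolynomial (Fin d) R)
        (Polynomial.derivative g) else 0 := by
  rw [Derivation.map_aeval]
  by_cases h : j = i <;> simp [h]

lemma pderiv_prod_ne (i : Fin d) (s : Finset (Fin d)) (hi : i ∉ s)
    (g : Fin d → Polynomial R) :
    pderiv i (∏ j ∈ s, Polynomial.aeval (X j : MvPolynomial (Fin d) R) (g j)) = 0 := by
  induction s using Finset.cons_induction with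
  | empty => simp
  | cons a s ha ih =>
      rw [Finset.prod_cons, pderiv_mul, pderiv_aeval_X,
        if_neg (by rintro rfl; exact hi (Finset.mem_cons_self _ _)),
        ih (fun h => hi (Finset.mem_cons_of_mem h))]
      simp

lemma pderiv_prodA (i : Fin d) (g : Fin d → Polynomial R) :
    pderiv i (prodA g) = prodA (Function.update g i (Polynomial.derivative (g i))) := by
  unfold prodA
  rw [← Finset.prod_erase_mul Finset.univ _ (Finset.mem_univ i),
    ← Finset.prod_erase_mul Finset.univ
      (fun j => Polynomial.aeval (X j : MvPolynomial (Fin d) R)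
        (Function.update g i (Polynomial.derivative (g i)) j))
      (Finset.mem_univ i),
    pderiv_mul, pderiv_prod_ne i _ (Finset.notMem_erase i _), pderiv_aeval_X, if_pos rfl]
  rw [Function.update_self]
  have : ∀ j ∈ Finset.univ.erase i,
      Polynomial.aeval (X j : MvPolynomial (Fin d) R)
        (Function.update g i (Polynomial.derivative (g i)) j)
      = Polynomial.aeval (X j : MvPolynomial (Fin d) R) (g j) := fun j hj => by
    rw [Function.update_of_ne (Finset.ne_of_mem_erase hj)]
  rw [Finset.prod_congr rfl this]
  ring

lemma Dop_pow_prodA (i : Fin d) (m : ℕ) (g : Fin d → Polynomial R) :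
    ((Dop i ^ m) : Module.End R (MvPolynomial (Fin d) R)) (prodA g) =
      prodA (Function.update g i (Polynomial.derivative^[m] (g i))) := by
  induction m with
  | zero => simp [Function.update_eq_self]
  | succ m ih =>
      rw [pow_succ', Module.End.mul_apply]
      show pderiv i ((Dop i ^ m) (prodA g)) = _
      rw [ih, pderiv_prodA, Function.update_idem, Function.update_self,
        Function.iterate_succ_apply' (⇑Polynomial.derivative) m (g i)]

/-- the number of times the index `i` is hit by derivatives. -/
def cnt (s : Finset (Fin d × Fin d)) (M : Fin d × Fin d → ℕ) (i : Fin d) : ℕ :=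
  ∑ p ∈ s, M p * ((if p.1 = i then 1 else 0) + (if p.2 = i then 1 else 0))

omit [CommRing R] [Algebra ℚ R] in
lemma cnt_pairs (M : Fin d × Fin d → ℕ) (i : Fin d) :
    cnt (pairs d) M i = rowSum M i := by
  unfold cnt rowSum pairs
  rw [Finset.sum_filter, Fintype.sum_prod_type]
  have h1 : ∀ a b : Fin d,
      (if a < b then M (a, b) * ((if a = i then 1 else 0) + (if b = i then 1 else 0)) else 0)
      = (if a = i then (if a < b then M (a, b) else 0) else 0)
        + (if b = i then (if a < b then M (a, b) else 0) else 0) := fun a b => by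
    split_ifs <;> ring
  simp only [h1, Finset.sum_add_distrib]
  have h2 : ∀ a : Fin d,
      (∑ b : Fin d, if a = i then (if a < b then M (a, b) else 0) else 0)
      = (if a = i then (∑ b : Fin d, if a < b then M (a, b) else 0) else 0) := fun a => by
    split_ifs with h
    · rfl
    · simp
  have h3 : ∀ a : Fin d,
      (∑ b : Fin d, if b = i then (if a < b then M (a, b) else 0) else 0)
      = (if a < i then M (a, i) else 0) := fun a => by
    rw [Finset.sum_ite_eq' Finset.univ i (fun b => if a < b then M (a, b) else 0)]
    simp
  simp only [h2, h3]
  rw [Finset.sum_ite_eq' Finset.univ i (fun a => ∑ b : Fin d, if a < b then M (a, b) else 0)]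
  simp only [Finset.mem_univ, if_pos]
  rw [← Finset.sum_add_distrib]
  refine Finset.sum_congr rfl fun j _ => ?_
  by_cases h : i < j
  · simp [h, asymm h]
  · simp [h]

/-- the summand operator of `Lop`. -/
def Topr (K : Fin d → Fin d → R) (p : Fin d × Fin d) :
    Module.End R (MvPolynomial (Fin d) R) :=
  K p.1 p.2 • (Dop p.1 * Dop p.2)

lemma Topr_comm (K : Fin d → Fin d → R) (p q : Fin d × Fin d) :
    Commute (Topr K p) (Topr K q) := by
  have h : Commute (Dop p.1 * Dop p.2 : Module.End R (MvPolynomial (Fin d) R))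
      (Dop q.1 * Dop q.2) :=
    ((Dop_comm (R := R) p.1 q.1).mul_right (Dop_comm (R := R) p.1 q.2)).mul_left
      ((Dop_comm (R := R) p.2 q.1).mul_right (Dop_comm (R := R) p.2 q.2))
  show _ * _ = _ * _
  unfold Topr
  rw [smul_mul_smul_comm, smul_mul_smul_comm, h.eq, mul_comm (K p.1 p.2)]

lemma noncommProd_Topr_apply (K : Fin d → Fin d → R) (M : Fin d × Fin d → ℕ)
    (s : Finset (Fin d × Fin d)) (hs : ∀ p ∈ s, p.1 ≠ p.2) (f : Fin d → Polynomial R) :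
    (s.noncommProd (fun p => Topr K p ^ M p)
        (@id ((s : Set (Fin d × Fin d)).Pairwise (Function.onFun Commute fun p => Topr K p ^ M p))
          fun p _ q _ _ => (Topr_comm K p q).pow_pow _ _)) (prodA f)
      = C (∏ p ∈ s, K p.1 p.2 ^ M p) *
        prodA (fun i => Polynomial.derivative^[cnt s M i] (f i)) := by
  induction s using Finset.cons_induction with
  | empty => simp [cnt, Module.End.one_apply]
  | cons a s ha ih =>
      simp only [Finset.noncommProd_cons, Module.End.mul_apply]
      rw [ih (fun p hp => hs p (Finset.mem_cons_of_mem hp))]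
      have ha12 : a.1 ≠ a.2 := hs a (Finset.mem_cons_self a s)
      set g : Fin d → Polynomial R := fun i => Polynomial.derivative^[cnt s M i] (f i) with hg
      have hTpow : Topr K a ^ M a
          = (K a.1 a.2 ^ M a) • ((Dop a.1 ^ M a) * (Dop a.2 ^ M a)
              : Module.End R (MvPolynomial (Fin d) R)) := by
        rw [Topr, smul_pow, (Dop_comm a.1 a.2).mul_pow]
      rw [hTpow]
      rw [LinearMap.smul_apply]
      rw [← smul_eq_C_mul, map_smul, Module.End.mul_apply, Dop_pow_prodA, Dop_pow_prodA]
      have hfun : Function.update (Function.update g a.2 (Polynomial.derivative^[M a] (g a.2)))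
            a.1 (Polynomial.derivative^[M a]
              ((Function.update g a.2 (Polynomial.derivative^[M a] (g a.2))) a.1))
          = fun i => Polynomial.derivative^[cnt (Finset.cons a s ha) M i] (f i) := by
        funext i
        have hc : cnt (Finset.cons a s ha) M i
            = M a * ((if a.1 = i then 1 else 0) + (if a.2 = i then 1 else 0)) + cnt s M i := by
          rw [cnt, Finset.sum_cons]; rfl
        by_cases h1 : i = a.1
        · subst h1
          rw [Function.update_self, Function.update_of_ne ha12, hg]
          rw [← Function.iterate_add_apply]
          rw [hc, if_pos rfl, if_neg (Ne.symm ha12)]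
          ring_nf
        · rw [Function.update_of_ne h1]
          by_cases h2 : i = a.2
          · subst h2
            rw [Function.update_self, hg, ← Function.iterate_add_apply]
            rw [hc, if_neg (fun h => h1 h.symm), if_pos rfl]
            ring_nf
          · rw [Function.update_of_ne h2, hc,
              if_neg (fun h => h1 h.symm), if_neg (fun h => h2 h.symm)]
            simp [hg]
      rw [hfun, smul_smul, smul_eq_C_mul, Finset.prod_cons, mul_comm (K a.1 a.2 ^ M a)]

lemma Lop_pow_apply (K : Fin d → Fin d → R) (f : Fin d → Polynomial R) (n : ℕ) :
    (Lop K ^ n) (∏ i : Fin d, Polynomial.aeval (X i) (f i))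
    = ∑ M ∈ Finset.piAntidiag (pairs d) n,
        Nat.multinomial (pairs d) M •
          ((∏ i : Fin d,
              Polynomial.aeval (X i) (Polynomial.derivative^[rowSum M i] (f i))) *
            ∏ p ∈ pairs d, C (K p.1 p.2) ^ M p) := by
  have hL : Lop K = ∑ p ∈ pairs d, Topr K p := rfl
  rw [hL, Finset.sum_pow_eq_sum_piAntidiag_of_commute _ _
    (fun p _ q _ _ => Topr_comm K p q) n, LinearMap.sum_apply]
  refine Finset.sum_congr rfl fun M hM => ?_
  rw [Module.End.mul_apply, Module.End.natCast_apply]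
  have hprod : (∏ i : Fin d, Polynomial.aeval (X i) (f i)) = prodA f := rfl
  rw [hprod, noncommProd_Topr_apply K M (pairs d)
    (fun p hp => ne_of_lt (Finset.mem_filter.mp hp).2) f]
  congr 1
  rw [mul_comm]
  congr 1
  · unfold prodA
    simp only [cnt_pairs]
  · rw [map_prod]
    refine Finset.prod_congr rfl fun p _ => ?_
    rw [map_pow]

end Aux

/-- the explicit adjacency-matrix expansion of the multiple
star product. -/
theorem multiStar_eq_sum_adjacency {d : ℕ} (ℏ : R) (K : Fin d → Fin d → R)
    (f : Fin d → Polynomial R) :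
    multiStar ℏ K f =
      finsum fun k : ℕ =>
        (k.factorial : ℚ)⁻¹ •
          (ℏ ^ k •
            ∑ M ∈ Finset.piAntidiag (pairs d) k,
              Nat.multinomial (pairs d) M •
                ((∏ i : Fin d,
                    Polynomial.aeval (X i) (Polynomial.derivative^[rowSum M i] (f i))) *
                  ∏ p ∈ pairs d, C (K p.1 p.2) ^ M p)) := by
  unfold multiStar
  exact finsum_congr fun n => by rw [Lop_pow_apply]

end
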